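/- Let X ⊆ H be a vector subspace with its own norm satisfying ‖·‖_H ≤ ‖·‖_X. If for some r > 0 and A > 0 every f ∈ X satisfies ∫_{(−r,r]} x^{−2} dσ_{f−f*}(x) ≤ A ‖f‖²_X, then ‖P_{t,s} − P‖²_{X→H} ≤ 4(A + 1/r²)(t−s)^{−2} for all t > s. -/

import Mathlib

open MeasureTheory Real Set intervalIntegral

/-- The Fejér-type kernel `F_τ(x) = (sin(τx/2)/(τx/2))²`. -/
noncomputable def Fker (τ x : ℝ) : ℝ := (Real.sin (τ * x / 2) / (τ * x / 2)) ^ 2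

/-- `ρ(α) = inf_{x>0} x^{2-α}/sin²x` (points with `sin x = 0` excluded). -/
noncomputable def rho (α : ℝ) : ℝ :=
  sInf {r : ℝ | ∃ x > 0, Real.sin x ≠ 0 ∧ r = x ^ (2 - α) / Real.sin x ^ 2}

lemma Fker_nonneg (τ x : ℝ) : 0 ≤ Fker τ x := sq_nonneg _

lemma Fker_eq (τ x : ℝ) : Fker τ x = Real.sin (τ * x / 2) ^ 2 / (τ * x / 2) ^ 2 :=
  div_pow _ _ _

lemma Fker_le_one (τ x : ℝ) : Fker τ x ≤ 1 := by
  rw [Fker_eq]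
  exact div_le_one_of_le₀ Real.sin_sq_le_sq (sq_nonneg _)

lemma Fker_meas (τ : ℝ) : Measurable (Fker τ) := by
  unfold Fker
  exact ((Real.measurable_sin.comp (by fun_prop)).div (by fun_prop)).pow_const 2

lemma Fker_key (τ x : ℝ) (hτ : τ ≠ 0) : Fker τ x ≤ 4 * (τ ^ 2)⁻¹ * (x ^ 2)⁻¹ := by
  rcases eq_or_ne x 0 with hx | hx
  · simp [Fker, hx]
  · have hy : (0:ℝ) < (τ * x / 2) ^ 2 := by positivity
    rw [Fker_eq]
    have h1 : Real.sin (τ * x / 2) ^ 2 / (τ * x / 2) ^ 2 ≤ 1 / (τ * x / 2) ^ 2 := by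
      gcongr
      exact Real.sin_sq_le_one _
    refine h1.trans_eq ?_
    field_simp
    ring

lemma rpow_neg_two (x : ℝ) : x ^ (-2 : ℝ) = (x ^ 2)⁻¹ := by
  rw [show (-2 : ℝ) = ((-2 : ℤ) : ℝ) by norm_num, Real.rpow_intCast,
    show ((-2 : ℤ)) = -(2 : ℤ) from rfl, zpow_neg]
  norm_cast

/-- `sin y / y → 1` as `y → 0`. -/
lemma sin_div_tendsto : Filter.Tendsto (fun y : ℝ => Real.sin y / y) (nhdsWithin 0 {(0:ℝ)}ᶜ) (nhds 1) := by
  have h := Real.hasDerivAt_sin 0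
  rw [Real.cos_zero] at h
  have h2 := hasDerivAt_iff_tendsto_slope.mp h
  refine h2.congr' ?_
  filter_upwards [self_mem_nhdsWithin] with y hy
  simp [slope_def_field, Real.sin_zero]

theorem stmt19
    {H : Type*} [NormedAddCommGroup H] [InnerProductSpace ℂ H] [CompleteSpace H]
    (U : ℝ → H →L[ℂ] H)
    (hUgrp : ∀ a b : ℝ, U (a + b) = (U a).comp (U b))
    (hUiso : ∀ (τ : ℝ) (g : H), ‖U τ g‖ = ‖g‖)
    (hcont : ∀ f : H, Continuous fun τ : ℝ => U τ f)
    -- `P` is the orthogonal projection onto the fixed vectors of the group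
    (P : H →L[ℂ] H)
    (hfix : ∀ (τ : ℝ) (f : H), U τ (P f) = P f)
    (horth : ∀ f g : H, (∀ τ : ℝ, U τ g = g) → (inner ℂ (f - P f) g : ℂ) = 0)
    -- `μ f` is the spectral measure `σ_{f - Pf}`, finite with no atom at `0`
    (μ : H → Measure ℝ) (hfin : ∀ f : H, IsFiniteMeasure (μ f))
    (hμ0 : ∀ f : H, μ f {0} = 0)
    (hrep : ∀ (f : H) (s t : ℝ), s < t →
      ‖(t - s)⁻¹ • (∫ τ in s..t, U τ f) - P f‖ ^ 2 = ∫ x, Fker (t - s) x ∂(μ f))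
    -- `X` is a vector subspace of `H` with its own norm `nX`
    (X : Submodule ℂ H) (nX : H → ℝ)
    (hnX : ∀ f ∈ X, 0 ≤ nX f)
    --  is continuously embedded: 
    (hemb : ∀ f ∈ X, ‖f‖ ≤ nX f)
    (r A : ℝ) (hr : 0 < r) (hA : 0 < A)
    (hint : ∀ f ∈ X,
      ∫⁻ x in Set.Ioc (-r) r, ENNReal.ofReal (x ^ (-2 : ℝ)) ∂(μ f) ≤
        ENNReal.ofReal (A * nX f ^ 2)) :
    ∀ s t : ℝ, s < t → ∀ f ∈ X,
      ‖(t - s)⁻¹ • (∫ τ in s..t, U τ f) - P f‖ ^ 2 ≤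
        4 * (A + 1 / r ^ 2) * (t - s) ^ (-2 : ℝ) * nX f ^ 2 := by
  intro s t hst f hf
  haveI := hfin f
  -- inner products are preserved
  have hUinner : ∀ (τ : ℝ) (x y : H), (inner ℂ (U τ x) (U τ y) : ℂ) = inner ℂ x y := by
    intro τ
    exact (LinearMap.norm_map_iff_inner_map_map (𝕜 := ℂ) (U τ)).mp (hUiso τ)
  -- ⟪P f, f⟫ = ⟪P f, P f⟫
  have hPf : (inner ℂ (P f) f : ℂ) = inner ℂ (P f) (P f) := by
    have h0 := horth f (P f) (fun τ => hfix τ f)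
    have h1 : (inner ℂ (P f) (f - P f) : ℂ) = 0 := by
      rw [← inner_conj_symm, h0, map_zero]
    rw [inner_sub_right] at h1
    exact sub_eq_zero.mp h1
  -- averaging bound: the ergodic average difference is bounded by ‖f‖
  have havg : ∀ a b : ℝ, a < b →
      ‖(b - a)⁻¹ • (∫ τ in a..b, U τ f) - P f‖ ≤ ‖f‖ := by
    intro a b hab
    have hba : b - a ≠ 0 := sub_ne_zero.mpr hab.ne'
    set g : H := (b - a)⁻¹ • (∫ τ in a..b, U τ f) with hg
    have hib : IntervalIntegrable (fun τ : ℝ => U τ f) volume a b :=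
      (hcont f).intervalIntegrable a b
    -- ⟪P f, g⟫ = ⟪P f, P f⟫
    have hinner_avg : (inner ℂ (P f) g : ℂ) = inner ℂ (P f) (P f) := by
      have hcomm := (innerSL ℂ (P f)).intervalIntegral_comp_comm hib
      have hval : ∀ τ : ℝ, (inner ℂ (P f) (U τ f) : ℂ) = inner ℂ (P f) f := by
        intro τ
        conv_lhs => rw [← hfix τ f]
        exact hUinner τ (P f) f
      have h2 : (inner ℂ (P f) (∫ τ in a..b, U τ f) : ℂ) = (b - a) • (inner ℂ (P f) f : ℂ) :=
        calc (inner ℂ (P f) (∫ τ in a..b, U τ f) : ℂ)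
            = ((innerSL ℂ) (P f)) (∫ τ in a..b, U τ f) := rfl
          _ = ∫ τ in a..b, ((innerSL ℂ) (P f)) (U τ f) := hcomm.symm
          _ = ∫ _ in a..b, (inner ℂ (P f) f : ℂ) :=
              intervalIntegral.integral_congr fun τ _ => hval τ
          _ = (b - a) • (inner ℂ (P f) f : ℂ) := intervalIntegral.integral_const _
      have h3 : (inner ℂ (P f) g : ℂ) = (b - a)⁻¹ • (inner ℂ (P f) (∫ τ in a..b, U τ f) : ℂ) :=
        calc (inner ℂ (P f) g : ℂ)
            = ((innerSL ℂ) (P f)) ((b - a)⁻¹ • (∫ τ in a..b, U τ f)) := rfl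
          _ = (b - a)⁻¹ • ((innerSL ℂ) (P f)) (∫ τ in a..b, U τ f) :=
              (innerSL ℂ (P f)).map_smul_of_tower _ _
          _ = (b - a)⁻¹ • (inner ℂ (P f) (∫ τ in a..b, U τ f) : ℂ) := rfl
      rw [h3, h2, smul_smul, inv_mul_cancel₀ hba, one_smul]
      exact hPf
    have horth2 : (inner ℂ (g - P f) (P f) : ℂ) = 0 := by
      rw [← inner_conj_symm, inner_sub_right, hinner_avg, sub_self, map_zero]
    have hpyth := norm_add_sq_eq_norm_sq_add_norm_sq_of_inner_eq_zero (𝕜 := ℂ)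
      (g - P f) (P f) horth2
    rw [sub_add_cancel] at hpyth
    have h1 : ‖g - P f‖ ≤ ‖g‖ := by
      nlinarith [norm_nonneg (g - P f), norm_nonneg g, norm_nonneg (P f)]
    refine h1.trans ?_
    have hC : ∀ x ∈ Set.uIoc a b, ‖U x f‖ ≤ ‖f‖ := fun x _ => (hUiso x f).le
    have h4 := intervalIntegral.norm_integral_le_of_norm_le_const hC
    rw [hg, norm_smul, Real.norm_eq_abs, abs_inv, abs_of_pos (sub_pos.mpr hab)]
    rw [abs_of_pos (sub_pos.mpr hab)] at h4
    calc (b - a)⁻¹ * ‖∫ τ in a..b, U τ f‖ ≤ (b - a)⁻¹ * (‖f‖ * (b - a)) := by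
          gcongr
      _ = ‖f‖ := by field_simp
  -- the total mass of μ f is at most ‖f‖²
  have hnormf2 : ‖f‖ ^ 2 ≤ nX f ^ 2 := pow_le_pow_left₀ (norm_nonneg f) (hemb f hf) 2
  have hμuniv : μ f Set.univ ≤ ENNReal.ofReal (nX f ^ 2) := by
    have hb : ∀ n : ℕ, ∫ x, Fker (1 / ((n : ℝ) + 1)) x ∂(μ f) ≤ ‖f‖ ^ 2 := by
      intro n
      have hpos : (0:ℝ) < 1 / ((n : ℝ) + 1) := by positivity
      have hrepn := hrep f 0 (1 / ((n : ℝ) + 1)) hpos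
      rw [show (1 / ((n : ℝ) + 1) - 0) = 1 / ((n : ℝ) + 1) by ring] at hrepn
      rw [← hrepn]
      have h5 := havg 0 (1 / ((n : ℝ) + 1)) hpos
      rw [show (1 / ((n : ℝ) + 1) - 0) = 1 / ((n : ℝ) + 1) by ring] at h5
      exact pow_le_pow_left₀ (norm_nonneg _) h5 2
    have hae : ∀ᵐ x ∂(μ f), x ≠ 0 := by
      rw [ae_iff]
      convert hμ0 f using 2
      ext x
      simp
    have htend : Filter.Tendsto (fun n : ℕ => ∫ x, Fker (1 / ((n : ℝ) + 1)) x ∂(μ f))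
        Filter.atTop (nhds (∫ _, (1:ℝ) ∂(μ f))) := by
      refine tendsto_integral_of_dominated_convergence (fun _ => (1:ℝ))
        (fun n => (Fker_meas _).aestronglyMeasurable) (integrable_const 1)
        (fun n => Filter.Eventually.of_forall fun x => ?_) ?_
      · rw [Real.norm_eq_abs, abs_of_nonneg (Fker_nonneg _ _)]
        exact Fker_le_one _ _
      · filter_upwards [hae] with x hx
        have hyt : Filter.Tendsto (fun n : ℕ => (1 / ((n : ℝ) + 1)) * x / 2)
            Filter.atTop (nhdsWithin 0 {(0:ℝ)}ᶜ) := by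
          have h6 : Filter.Tendsto (fun n : ℕ => (1 / ((n : ℝ) + 1)) * x / 2)
              Filter.atTop (nhds 0) := by
            have := tendsto_one_div_add_atTop_nhds_zero_nat (𝕜 := ℝ)
            have := (this.mul_const x).div_const (2:ℝ)
            simpa using this
          refine tendsto_nhdsWithin_of_tendsto_nhds_of_eventually_within _ h6 ?_
          refine Filter.Eventually.of_forall fun n => ?_
          have : (1 / ((n : ℝ) + 1)) * x / 2 ≠ 0 := by positivity
          exact this
        have h7 := (sin_div_tendsto.comp hyt).pow 2
        simpa only [Fker, Function.comp_def, one_pow] using h7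
    have h8 : ∫ _, (1:ℝ) ∂(μ f) = (μ f Set.univ).toReal := by simp [measureReal_def]
    rw [h8] at htend
    have h9 : (μ f Set.univ).toReal ≤ ‖f‖ ^ 2 :=
      le_of_tendsto htend (Filter.Eventually.of_forall hb)
    have h10 : (μ f Set.univ).toReal ≤ nX f ^ 2 := h9.trans hnormf2
    rw [← ENNReal.ofReal_toReal (measure_ne_top (μ f) _)]
    exact ENNReal.ofReal_le_ofReal h10
  -- main estimate
  rw [hrep f s t hst]
  set τ := t - s with hτdef
  have hτ : 0 < τ := sub_pos.mpr hst
  set N := nX f with hN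
  have hN0 : 0 ≤ N := hnX f hf
  have hintf := hint f hf
  simp only [rpow_neg_two] at hintf ⊢
  -- pass to lintegral
  have heq : ∫ x, Fker τ x ∂(μ f) =
      (∫⁻ x, ENNReal.ofReal (Fker τ x) ∂(μ f)).toReal :=
    integral_eq_lintegral_of_nonneg_ae (Filter.Eventually.of_forall fun x => Fker_nonneg _ _)
      (Fker_meas τ).aestronglyMeasurable
  rw [heq]
  set S : Set ℝ := Set.Ioc (-r) r with hS
  have hSm : MeasurableSet S := measurableSet_Ioc
  have hsplit : ∫⁻ x, ENNReal.ofReal (Fker τ x) ∂(μ f) =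
      (∫⁻ x in S, ENNReal.ofReal (Fker τ x) ∂(μ f)) +
      ∫⁻ x in Sᶜ, ENNReal.ofReal (Fker τ x) ∂(μ f) :=
    (lintegral_add_compl _ hSm).symm
  have hb1 : ∫⁻ x in S, ENNReal.ofReal (Fker τ x) ∂(μ f) ≤
      ENNReal.ofReal (4 * (τ ^ 2)⁻¹) * ENNReal.ofReal (A * N ^ 2) := by
    calc ∫⁻ x in S, ENNReal.ofReal (Fker τ x) ∂(μ f)
        ≤ ∫⁻ x in S, ENNReal.ofReal (4 * (τ ^ 2)⁻¹) * ENNReal.ofReal ((x ^ 2)⁻¹) ∂(μ f) := by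
          refine lintegral_mono fun x => ?_
          rw [← ENNReal.ofReal_mul (by positivity)]
          exact ENNReal.ofReal_le_ofReal (Fker_key τ x hτ.ne')
      _ = ENNReal.ofReal (4 * (τ ^ 2)⁻¹) * ∫⁻ x in S, ENNReal.ofReal ((x ^ 2)⁻¹) ∂(μ f) := by
          rw [lintegral_const_mul]
          exact ((measurable_id.pow_const 2).inv).ennreal_ofReal
      _ ≤ ENNReal.ofReal (4 * (τ ^ 2)⁻¹) * ENNReal.ofReal (A * N ^ 2) := by
          exact mul_le_mul_right hintf _
  have hb2 : ∫⁻ x in Sᶜ, ENNReal.ofReal (Fker τ x) ∂(μ f) ≤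
      ENNReal.ofReal (4 * (τ ^ 2)⁻¹ * (r ^ 2)⁻¹) * ENNReal.ofReal (N ^ 2) := by
    have hptc : ∀ x ∈ Sᶜ, ENNReal.ofReal (Fker τ x) ≤
        ENNReal.ofReal (4 * (τ ^ 2)⁻¹ * (r ^ 2)⁻¹) := by
      intro x hx
      refine ENNReal.ofReal_le_ofReal ?_
      have hxr : r ^ 2 ≤ x ^ 2 := by
        rw [hS, Set.mem_compl_iff, Set.mem_Ioc, not_and_or, not_lt, not_le] at hx
        rcases hx with h | h
        · nlinarith
        · nlinarith
      have := Fker_key τ x hτ.ne'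
      have h11 : (x ^ 2)⁻¹ ≤ (r ^ 2)⁻¹ := by
        apply inv_anti₀ (by positivity) hxr
      calc Fker τ x ≤ 4 * (τ ^ 2)⁻¹ * (x ^ 2)⁻¹ := this
        _ ≤ 4 * (τ ^ 2)⁻¹ * (r ^ 2)⁻¹ := mul_le_mul_of_nonneg_left h11 (by positivity)
    calc ∫⁻ x in Sᶜ, ENNReal.ofReal (Fker τ x) ∂(μ f)
        ≤ ∫⁻ _ in Sᶜ, ENNReal.ofReal (4 * (τ ^ 2)⁻¹ * (r ^ 2)⁻¹) ∂(μ f) :=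
          setLIntegral_mono' hSm.compl hptc
      _ = ENNReal.ofReal (4 * (τ ^ 2)⁻¹ * (r ^ 2)⁻¹) * μ f Sᶜ := setLIntegral_const _ _
      _ ≤ ENNReal.ofReal (4 * (τ ^ 2)⁻¹ * (r ^ 2)⁻¹) * ENNReal.ofReal (N ^ 2) := by
          refine mul_le_mul_right ((measure_mono (Set.subset_univ _)).trans hμuniv) _
  have htotal : ∫⁻ x, ENNReal.ofReal (Fker τ x) ∂(μ f) ≤
      ENNReal.ofReal (4 * (A + 1 / r ^ 2) * (τ ^ 2)⁻¹ * N ^ 2) := by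
    rw [hsplit]
    calc (∫⁻ x in S, ENNReal.ofReal (Fker τ x) ∂(μ f)) +
        ∫⁻ x in Sᶜ, ENNReal.ofReal (Fker τ x) ∂(μ f)
        ≤ ENNReal.ofReal (4 * (τ ^ 2)⁻¹) * ENNReal.ofReal (A * N ^ 2) +
          ENNReal.ofReal (4 * (τ ^ 2)⁻¹ * (r ^ 2)⁻¹) * ENNReal.ofReal (N ^ 2) :=
          add_le_add hb1 hb2
      _ = ENNReal.ofReal (4 * (τ ^ 2)⁻¹ * (A * N ^ 2) +
            4 * (τ ^ 2)⁻¹ * (r ^ 2)⁻¹ * N ^ 2) := by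
          rw [← ENNReal.ofReal_mul (by positivity), ← ENNReal.ofReal_mul (by positivity),
            ENNReal.ofReal_add (by positivity) (by positivity)]
      _ = ENNReal.ofReal (4 * (A + 1 / r ^ 2) * (τ ^ 2)⁻¹ * N ^ 2) := by
          congr 1
          field_simp
  exact ENNReal.toReal_le_of_le_ofReal (by positivity) htotal
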